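/- For any subobject F of an object E in a slope-filtered abelian category with Harder–Narasimhan filtration, the point (rk F, deg F) lies on or below the Harder–Narasimhan polygon of E. -/

import Mathlib

open CategoryTheory CategoryTheory.Limits

/-- Semistability with respect to slope `μ = dg / rk`. -/
def SlopeSemistable {C : Type*} [Category C] (rk dg : C → ℚ) (E : C) : Prop :=
  ∀ (A : C) (i : A ⟶ E), Mono i → 0 < rk A → dg A * rk E ≤ dg E * rk A

open CategoryTheory.Abelian CategoryTheory.Abelian.Pseudoelement in
/-- If a commutative square of monomorphisms is a pullback, the induced map on
cokernels of the horizontal maps is a monomorphism. -/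
lemma mono_cokernel_desc_of_isPullback {C : Type*} [Category C] [Abelian C]
    {K A B T : C} {a : K ⟶ A} {c : K ⟶ B} {iA : A ⟶ T} {iB : B ⟶ T}
    (hpb : IsPullback a c iA iB)
    (w : a ≫ (iA ≫ cokernel.π iB) = 0) :
    Mono (cokernel.desc a (iA ≫ cokernel.π iB) w) := by
  apply Pseudoelement.mono_of_zero_of_map_zero
  intro x hx
  obtain ⟨y, rfl⟩ := Pseudoelement.pseudo_surjective_of_epi (cokernel.π a) x
  have h1 : pseudoApply (cokernel.π iB) (pseudoApply iA y) = 0 := by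
    rw [← Pseudoelement.comp_apply, ← cokernel.π_desc a _ w, Pseudoelement.comp_apply, hx]
  obtain ⟨z, hz⟩ := (Pseudoelement.pseudo_exact_of_exact
    (CategoryTheory.ShortComplex.exact_cokernel iB)) (pseudoApply iA y) h1
  obtain ⟨s, hs1, hs2⟩ := Pseudoelement.pseudo_pullback (f := iA) (g := iB) (p := y) (q := z) hz.symm
  have hy : pseudoApply a (pseudoApply hpb.isoPullback.inv s) = y := by
    rw [← Pseudoelement.comp_apply, hpb.isoPullback_inv_fst, hs1]
  rw [← hy, ← Pseudoelement.comp_apply, cokernel.condition]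
  exact Pseudoelement.zero_apply _ _

/-- Intersecting two nested subobjects with a third yields a pullback square. -/
lemma subobject_inf_isPullback {C : Type*} [Category C] [Abelian C] {E : C}
    (F P Q : Subobject E) (h : P ≤ Q) :
    IsPullback (Subobject.ofLE (F ⊓ P) (F ⊓ Q) (inf_le_inf_left F h))
      (Subobject.ofLE (F ⊓ P) P inf_le_right)
      (Subobject.ofLE (F ⊓ Q) Q inf_le_right)
      (Subobject.ofLE P Q h) := by
  have comm : Subobject.ofLE (F ⊓ P) (F ⊓ Q) (inf_le_inf_left F h) ≫
      Subobject.ofLE (F ⊓ Q) Q inf_le_right =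
      Subobject.ofLE (F ⊓ P) P inf_le_right ≫ Subobject.ofLE P Q h := by
    rw [Subobject.ofLE_comp_ofLE, Subobject.ofLE_comp_ofLE]
  apply IsPullback.of_isLimit (c := PullbackCone.mk _ _ comm)
  have key : ∀ (s : PullbackCone (Subobject.ofLE (F ⊓ Q) Q inf_le_right) (Subobject.ofLE P Q h)),
      s.fst ≫ (F ⊓ Q).arrow = s.snd ≫ P.arrow := by
    intro s
    rw [← Subobject.ofLE_arrow (inf_le_right : F ⊓ Q ≤ Q), ← Subobject.ofLE_arrow h,
      ← Category.assoc, ← Category.assoc, s.condition]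
  have hfacF : ∀ (s : PullbackCone (Subobject.ofLE (F ⊓ Q) Q inf_le_right)
      (Subobject.ofLE P Q h)), (F ⊓ P).Factors (s.fst ≫ (F ⊓ Q).arrow) := by
    intro s
    rw [Subobject.inf_factors]
    exact ⟨Subobject.factors_of_factors_right s.fst (Subobject.inf_arrow_factors_left F Q),
      (key s) ▸ Subobject.factors_comp_arrow s.snd⟩
  refine PullbackCone.IsLimit.mk comm
    (fun s => Subobject.factorThru _ _ (hfacF s)) (fun s => ?_) (fun s => ?_)
    (fun s m hm1 _ => ?_)
  · rw [← cancel_mono (F ⊓ Q).arrow, Category.assoc, Subobject.ofLE_arrow,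
      Subobject.factorThru_arrow]
  · rw [← cancel_mono P.arrow, Category.assoc, Subobject.ofLE_arrow,
      Subobject.factorThru_arrow, key s]
  · rw [← cancel_mono (F ⊓ P).arrow, Subobject.factorThru_arrow,
      ← Subobject.ofLE_arrow (inf_le_inf_left F h : F ⊓ P ≤ F ⊓ Q), ← Category.assoc, hm1]

/-- If the inclusion of one subobject in another is an isomorphism, they are equal. -/
lemma subobject_eq_of_isIso_ofLE {C : Type*} [Category C] [Abelian C] {E : C}
    {X Y : Subobject E} (h : X ≤ Y) [IsIso (Subobject.ofLE X Y h)] : X = Y :=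
  le_antisymm h (Subobject.le_of_comm (inv (Subobject.ofLE X Y h))
    (by rw [IsIso.inv_comp_eq, Subobject.ofLE_arrow]))

/-- The purely arithmetic heart of the polygon bound. -/
lemma HN_polygon_arith (n m : ℕ) (hm : m < n) (δ ρ D R : ℕ → ℚ)
    (h1 : ∀ j, j < n → δ j * R j ≤ D j * ρ j)
    (h2 : ∀ j, j < n → 0 ≤ ρ j)
    (h3 : ∀ j, j < n → ρ j ≤ R j)
    (h4 : ∀ j, j < n → 0 < R j)
    (h5 : ∀ j k, j < k → k < n → D k * R j < D j * R k) :
    (∑ j ∈ Finset.range n, δ j - ∑ j ∈ Finset.range m, D j) * R m ≤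
      D m * (∑ j ∈ Finset.range n, ρ j - ∑ j ∈ Finset.range m, R j) := by
  have key : ∀ j ∈ Finset.range n,
      δ j * R m - D m * ρ j ≤ (if j < m then D j * R m - D m * R j else 0) := by
    intro j hj
    rw [Finset.mem_range] at hj
    rcases lt_trichotomy j m with hjm | rfl | hmj
    · rw [if_pos hjm]
      have hs := h5 j m hjm hm
      nlinarith [mul_le_mul_of_nonneg_right (h1 j hj) (h4 m hm).le,
        mul_nonneg (sub_nonneg.2 (h3 j hj)) (sub_nonneg.2 hs.le), h4 j hj]
    · rw [if_neg (lt_irrefl j)]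
      linarith [h1 j hj]
    · rw [if_neg (not_lt.2 hmj.le)]
      have hs := h5 m j hmj hj
      nlinarith [mul_le_mul_of_nonneg_right (h1 j hj) (h4 m hm).le,
        mul_nonneg (h2 j hj) (sub_nonneg.2 hs.le), h4 j hj]
  have hsum := Finset.sum_le_sum key
  have hsplit : ∑ j ∈ Finset.range n, (if j < m then D j * R m - D m * R j else 0)
      = ∑ j ∈ Finset.range m, (D j * R m - D m * R j) := by
    rw [← Finset.sum_subset (Finset.range_subset_range.2 hm.le)
      (fun j _ hj => if_neg (by simpa using hj))]
    exact Finset.sum_congr rfl fun j hj => if_pos (Finset.mem_range.1 hj)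
  rw [hsplit, Finset.sum_sub_distrib, Finset.sum_sub_distrib, ← Finset.sum_mul,
    ← Finset.sum_mul, ← Finset.mul_sum, ← Finset.mul_sum] at hsum
  ring_nf
  ring_nf at hsum
  linarith

/-- For any subobject `F` of an object `E` with Harder–Narasimhan
filtration `⊥ = E₀ < E₁ < … < Eₙ = ⊤` (successive quotients semistable with
strictly decreasing slopes), the point `(rk F, deg F)` lies on or below the
Harder–Narasimhan polygon of `E`: for the segment `[rk Eᵢ, rk Eᵢ₊₁]` containing
`rk F`, one has (cross-multiplied)
`(deg F − deg Eᵢ) (rk Eᵢ₊₁ − rk Eᵢ) ≤ (deg Eᵢ₊₁ − deg Eᵢ) (rk F − rk Eᵢ)`. -/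
theorem subobject_point_on_or_below_HN_polygon
    {C : Type*} [Category C] [Abelian C]
    (rk dg : C → ℚ)
    (hrk_add : ∀ (X Y : C) (f : X ⟶ Y), Mono f → rk Y = rk X + rk (cokernel f))
    (hdg_add : ∀ (X Y : C) (f : X ⟶ Y), Mono f → dg Y = dg X + dg (cokernel f))
    (hrk_pos : ∀ X : C, ¬ IsZero X → 0 < rk X)
    (hrk_zero : ∀ X : C, IsZero X → rk X = 0)
    (E : C) (n : ℕ)
    (Efil : Fin (n + 1) → Subobject E)
    (hmono : StrictMono Efil)
    (hbot : Efil 0 = ⊥) (htop : Efil (Fin.last n) = ⊤)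
    (Q : Fin n → C)
    (hQ : ∀ i : Fin n, Q i = cokernel (Subobject.ofLE (Efil i.castSucc) (Efil i.succ)
      (hmono.monotone (show i.castSucc < i.succ from Fin.castSucc_lt_succ).le)))
    (hQss : ∀ i : Fin n, SlopeSemistable rk dg (Q i))
    (hQslopes : ∀ i j : Fin n, i < j → dg (Q j) * rk (Q i) < dg (Q i) * rk (Q j)) :
    ∀ (F : Subobject E) (i : Fin n),
      rk ((Efil i.castSucc : C)) ≤ rk ((F : C)) →
      rk ((F : C)) ≤ rk ((Efil i.succ : C)) →
      (dg ((F : C)) - dg ((Efil i.castSucc : C))) *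
          (rk ((Efil i.succ : C)) - rk ((Efil i.castSucc : C))) ≤
        (dg ((Efil i.succ : C)) - dg ((Efil i.castSucc : C))) *
          (rk ((F : C)) - rk ((Efil i.castSucc : C))) := by
  intro F i _ _
  have rk_nonneg : ∀ X : C, 0 ≤ rk X := fun X => by
    by_cases h : IsZero X
    · rw [hrk_zero X h]
    · exact (hrk_pos X h).le
  -- Step inequalities: the quotient `(F ⊓ E_{j+1})/(F ⊓ E_j)` embeds into `Q j`.
  have step : ∀ j : Fin n,
      (dg ((F ⊓ Efil j.succ : Subobject E) : C) - dg ((F ⊓ Efil j.castSucc : Subobject E) : C))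
          * rk (Q j)
        ≤ dg (Q j) * (rk ((F ⊓ Efil j.succ : Subobject E) : C)
            - rk ((F ⊓ Efil j.castSucc : Subobject E) : C))
      ∧ 0 ≤ rk ((F ⊓ Efil j.succ : Subobject E) : C)
            - rk ((F ⊓ Efil j.castSucc : Subobject E) : C)
      ∧ rk ((F ⊓ Efil j.succ : Subobject E) : C)
            - rk ((F ⊓ Efil j.castSucc : Subobject E) : C) ≤ rk (Q j) := by
    intro j
    have hpb := subobject_inf_isPullback F (Efil j.castSucc) (Efil j.succ)
      (hmono.monotone (show j.castSucc < j.succ from Fin.castSucc_lt_succ).le)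
    by_cases hz : IsZero (cokernel (Subobject.ofLE (F ⊓ Efil j.castSucc) (F ⊓ Efil j.succ)
        (inf_le_inf_left F (hmono.monotone (show j.castSucc < j.succ from Fin.castSucc_lt_succ).le))))
    · haveI : Epi (Subobject.ofLE (F ⊓ Efil j.castSucc) (F ⊓ Efil j.succ)
          (inf_le_inf_left F (hmono.monotone (show j.castSucc < j.succ from Fin.castSucc_lt_succ).le))) :=
        Preadditive.epi_of_isZero_cokernel _ hz
      haveI : IsIso (Subobject.ofLE (F ⊓ Efil j.castSucc) (F ⊓ Efil j.succ)
          (inf_le_inf_left F (hmono.monotone (show j.castSucc < j.succ from Fin.castSucc_lt_succ).le))) :=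
        isIso_of_mono_of_epi _
      have heq : F ⊓ Efil j.castSucc = F ⊓ Efil j.succ :=
        subobject_eq_of_isIso_ofLE (inf_le_inf_left F (hmono.monotone (show j.castSucc < j.succ from Fin.castSucc_lt_succ).le))
      rw [← heq]
      exact ⟨by simp, by simp, by simpa using rk_nonneg (Q j)⟩
    · have w : Subobject.ofLE (F ⊓ Efil j.castSucc) (F ⊓ Efil j.succ)
            (inf_le_inf_left F (hmono.monotone (show j.castSucc < j.succ from Fin.castSucc_lt_succ).le)) ≫
          (Subobject.ofLE (F ⊓ Efil j.succ) (Efil j.succ) inf_le_right ≫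
            cokernel.π (Subobject.ofLE (Efil j.castSucc) (Efil j.succ)
              (hmono.monotone (show j.castSucc < j.succ from Fin.castSucc_lt_succ).le))) = 0 := by
        rw [← Category.assoc, hpb.w, Category.assoc, cokernel.condition, comp_zero]
      have hmonoφ := mono_cokernel_desc_of_isPullback hpb w
      have hrkA := hrk_pos _ hz
      have hss := hQss j
      rw [hQ j] at hss ⊢
      have hsemi := hss _ _ hmonoφ hrkA
      have hd := hdg_add _ _ (Subobject.ofLE (F ⊓ Efil j.castSucc) (F ⊓ Efil j.succ)
        (inf_le_inf_left F (hmono.monotone (show j.castSucc < j.succ from Fin.castSucc_lt_succ).le))) inferInstance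
      have hr := hrk_add _ _ (Subobject.ofLE (F ⊓ Efil j.castSucc) (F ⊓ Efil j.succ)
        (inf_le_inf_left F (hmono.monotone (show j.castSucc < j.succ from Fin.castSucc_lt_succ).le))) inferInstance
      have hrφ := hrk_add _ _ _ hmonoφ
      have hcoker := rk_nonneg (cokernel (cokernel.desc _ _ w))
      refine ⟨?_, by linarith [rk_nonneg (cokernel (Subobject.ofLE
        (F ⊓ Efil j.castSucc) (F ⊓ Efil j.succ)
        (inf_le_inf_left F (hmono.monotone (show j.castSucc < j.succ from Fin.castSucc_lt_succ).le))))], by linarith⟩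
      rw [hd, hr]
      simpa using hsemi
  -- Rank and degree of the quotients in terms of the filtration.
  have hRD : ∀ j : Fin n,
      rk (Q j) = rk ((Efil j.succ : Subobject E) : C) - rk ((Efil j.castSucc : Subobject E) : C)
      ∧ dg (Q j) = dg ((Efil j.succ : Subobject E) : C)
          - dg ((Efil j.castSucc : Subobject E) : C) := by
    intro j
    have hr := hrk_add _ _ (Subobject.ofLE (Efil j.castSucc) (Efil j.succ)
      (hmono.monotone (show j.castSucc < j.succ from Fin.castSucc_lt_succ).le)) inferInstance
    have hd := hdg_add _ _ (Subobject.ofLE (Efil j.castSucc) (Efil j.succ)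
      (hmono.monotone (show j.castSucc < j.succ from Fin.castSucc_lt_succ).le)) inferInstance
    rw [← hQ j] at hr hd
    exact ⟨by linarith, by linarith⟩
  have hQpos : ∀ j : Fin n, 0 < rk (Q j) := by
    intro j
    apply hrk_pos
    intro hzero
    rw [hQ j] at hzero
    haveI := Preadditive.epi_of_isZero_cokernel _ hzero
    haveI : IsIso (Subobject.ofLE (Efil j.castSucc) (Efil j.succ)
        (hmono.monotone (show j.castSucc < j.succ from Fin.castSucc_lt_succ).le)) := isIso_of_mono_of_epi _
    exact (hmono (show j.castSucc < j.succ from Fin.castSucc_lt_succ)).ne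
      (subobject_eq_of_isIso_ofLE (hmono.monotone (show j.castSucc < j.succ from Fin.castSucc_lt_succ).le))
  -- reindex over ℕ
  have hmin : ∀ k : ℕ, min k n < n + 1 := fun k => by omega
  have h1' : ∀ j, j < n →
      (dg ((F ⊓ Efil ⟨min (j+1) n, hmin (j+1)⟩ : Subobject E) : C)
        - dg ((F ⊓ Efil ⟨min j n, hmin j⟩ : Subobject E) : C))
        * (rk ((Efil ⟨min (j+1) n, hmin (j+1)⟩ : Subobject E) : C)
            - rk ((Efil ⟨min j n, hmin j⟩ : Subobject E) : C))
      ≤ (dg ((Efil ⟨min (j+1) n, hmin (j+1)⟩ : Subobject E) : C)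
          - dg ((Efil ⟨min j n, hmin j⟩ : Subobject E) : C))
        * (rk ((F ⊓ Efil ⟨min (j+1) n, hmin (j+1)⟩ : Subobject E) : C)
            - rk ((F ⊓ Efil ⟨min j n, hmin j⟩ : Subobject E) : C)) := by
    intro j hj
    have e1 : (⟨min j n, hmin j⟩ : Fin (n+1)) = (⟨j, hj⟩ : Fin n).castSucc :=
      Fin.ext (by simp [Fin.castSucc, Fin.castAdd, Fin.castLE]; omega)
    have e2 : (⟨min (j+1) n, hmin (j+1)⟩ : Fin (n+1)) = (⟨j, hj⟩ : Fin n).succ :=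
      Fin.ext (by simp [Fin.succ]; omega)
    rw [e1, e2]
    have hs := (step ⟨j, hj⟩).1
    have hrd := hRD ⟨j, hj⟩
    rw [hrd.1, hrd.2] at hs
    exact hs
  have h2' : ∀ j, j < n →
      0 ≤ rk ((F ⊓ Efil ⟨min (j+1) n, hmin (j+1)⟩ : Subobject E) : C)
          - rk ((F ⊓ Efil ⟨min j n, hmin j⟩ : Subobject E) : C) := by
    intro j hj
    have e1 : (⟨min j n, hmin j⟩ : Fin (n+1)) = (⟨j, hj⟩ : Fin n).castSucc :=
      Fin.ext (by simp [Fin.castSucc, Fin.castAdd, Fin.castLE]; omega)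
    have e2 : (⟨min (j+1) n, hmin (j+1)⟩ : Fin (n+1)) = (⟨j, hj⟩ : Fin n).succ :=
      Fin.ext (by simp [Fin.succ]; omega)
    rw [e1, e2]
    exact (step ⟨j, hj⟩).2.1
  have h3' : ∀ j, j < n →
      rk ((F ⊓ Efil ⟨min (j+1) n, hmin (j+1)⟩ : Subobject E) : C)
          - rk ((F ⊓ Efil ⟨min j n, hmin j⟩ : Subobject E) : C)
      ≤ rk ((Efil ⟨min (j+1) n, hmin (j+1)⟩ : Subobject E) : C)
          - rk ((Efil ⟨min j n, hmin j⟩ : Subobject E) : C) := by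
    intro j hj
    have e1 : (⟨min j n, hmin j⟩ : Fin (n+1)) = (⟨j, hj⟩ : Fin n).castSucc :=
      Fin.ext (by simp [Fin.castSucc, Fin.castAdd, Fin.castLE]; omega)
    have e2 : (⟨min (j+1) n, hmin (j+1)⟩ : Fin (n+1)) = (⟨j, hj⟩ : Fin n).succ :=
      Fin.ext (by simp [Fin.succ]; omega)
    rw [e1, e2]
    have hs := (step ⟨j, hj⟩).2.2
    rw [(hRD ⟨j, hj⟩).1] at hs
    exact hs
  have h4' : ∀ j, j < n →
      0 < rk ((Efil ⟨min (j+1) n, hmin (j+1)⟩ : Subobject E) : C)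
          - rk ((Efil ⟨min j n, hmin j⟩ : Subobject E) : C) := by
    intro j hj
    have e1 : (⟨min j n, hmin j⟩ : Fin (n+1)) = (⟨j, hj⟩ : Fin n).castSucc :=
      Fin.ext (by simp [Fin.castSucc, Fin.castAdd, Fin.castLE]; omega)
    have e2 : (⟨min (j+1) n, hmin (j+1)⟩ : Fin (n+1)) = (⟨j, hj⟩ : Fin n).succ :=
      Fin.ext (by simp [Fin.succ]; omega)
    rw [e1, e2]
    have := hQpos ⟨j, hj⟩
    rw [(hRD ⟨j, hj⟩).1] at this
    exact this
  have h5' : ∀ j k, j < k → k < n →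
      (dg ((Efil ⟨min (k+1) n, hmin (k+1)⟩ : Subobject E) : C)
        - dg ((Efil ⟨min k n, hmin k⟩ : Subobject E) : C))
        * (rk ((Efil ⟨min (j+1) n, hmin (j+1)⟩ : Subobject E) : C)
            - rk ((Efil ⟨min j n, hmin j⟩ : Subobject E) : C))
      < (dg ((Efil ⟨min (j+1) n, hmin (j+1)⟩ : Subobject E) : C)
          - dg ((Efil ⟨min j n, hmin j⟩ : Subobject E) : C))
        * (rk ((Efil ⟨min (k+1) n, hmin (k+1)⟩ : Subobject E) : C)
            - rk ((Efil ⟨min k n, hmin k⟩ : Subobject E) : C)) := by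
    intro j k hjk hk
    have hj : j < n := lt_trans hjk hk
    have e1 : (⟨min j n, hmin j⟩ : Fin (n+1)) = (⟨j, hj⟩ : Fin n).castSucc :=
      Fin.ext (by simp [Fin.castSucc, Fin.castAdd, Fin.castLE]; omega)
    have e2 : (⟨min (j+1) n, hmin (j+1)⟩ : Fin (n+1)) = (⟨j, hj⟩ : Fin n).succ :=
      Fin.ext (by simp [Fin.succ]; omega)
    have e3 : (⟨min k n, hmin k⟩ : Fin (n+1)) = (⟨k, hk⟩ : Fin n).castSucc :=
      Fin.ext (by simp [Fin.castSucc, Fin.castAdd, Fin.castLE]; omega)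
    have e4 : (⟨min (k+1) n, hmin (k+1)⟩ : Fin (n+1)) = (⟨k, hk⟩ : Fin n).succ :=
      Fin.ext (by simp [Fin.succ]; omega)
    rw [e1, e2, e3, e4]
    have hs := hQslopes ⟨j, hj⟩ ⟨k, hk⟩ (by exact hjk)
    rw [(hRD ⟨j, hj⟩).1, (hRD ⟨j, hj⟩).2, (hRD ⟨k, hk⟩).1, (hRD ⟨k, hk⟩).2] at hs
    exact hs
  have main := HN_polygon_arith n i.1 i.isLt
    (fun j => dg ((F ⊓ Efil ⟨min (j+1) n, hmin (j+1)⟩ : Subobject E) : C)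
      - dg ((F ⊓ Efil ⟨min j n, hmin j⟩ : Subobject E) : C))
    (fun j => rk ((F ⊓ Efil ⟨min (j+1) n, hmin (j+1)⟩ : Subobject E) : C)
      - rk ((F ⊓ Efil ⟨min j n, hmin j⟩ : Subobject E) : C))
    (fun j => dg ((Efil ⟨min (j+1) n, hmin (j+1)⟩ : Subobject E) : C)
      - dg ((Efil ⟨min j n, hmin j⟩ : Subobject E) : C))
    (fun j => rk ((Efil ⟨min (j+1) n, hmin (j+1)⟩ : Subobject E) : C)
      - rk ((Efil ⟨min j n, hmin j⟩ : Subobject E) : C))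
    h1' h2' h3' h4' h5'
  -- telescoping sums
  have he0 : (⟨min 0 n, hmin 0⟩ : Fin (n+1)) = 0 := Fin.ext (by simp)
  have hen : (⟨min n n, hmin n⟩ : Fin (n+1)) = Fin.last n := Fin.ext (by simp)
  have ei1 : (⟨min i.1 n, hmin i.1⟩ : Fin (n+1)) = i.castSucc :=
    Fin.ext (by have := i.isLt; simp only [Fin.val_mk, Fin.coe_castSucc]; omega)
  have ei2 : (⟨min (i.1+1) n, hmin (i.1+1)⟩ : Fin (n+1)) = i.succ :=
    Fin.ext (by have := i.isLt; simp only [Fin.val_mk, Fin.val_succ]; omega)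
  have t1 : ∑ j ∈ Finset.range n,
      (dg ((F ⊓ Efil ⟨min (j+1) n, hmin (j+1)⟩ : Subobject E) : C)
        - dg ((F ⊓ Efil ⟨min j n, hmin j⟩ : Subobject E) : C))
      = dg ((F ⊓ Efil ⟨min n n, hmin n⟩ : Subobject E) : C)
        - dg ((F ⊓ Efil ⟨min 0 n, hmin 0⟩ : Subobject E) : C) :=
    Finset.sum_range_sub (fun k => dg ((F ⊓ Efil ⟨min k n, hmin k⟩ : Subobject E) : C)) n
  have t2 : ∑ j ∈ Finset.range n,
      (rk ((F ⊓ Efil ⟨min (j+1) n, hmin (j+1)⟩ : Subobject E) : C)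
        - rk ((F ⊓ Efil ⟨min j n, hmin j⟩ : Subobject E) : C))
      = rk ((F ⊓ Efil ⟨min n n, hmin n⟩ : Subobject E) : C)
        - rk ((F ⊓ Efil ⟨min 0 n, hmin 0⟩ : Subobject E) : C) :=
    Finset.sum_range_sub (fun k => rk ((F ⊓ Efil ⟨min k n, hmin k⟩ : Subobject E) : C)) n
  have t3 : ∑ j ∈ Finset.range i.1,
      (dg ((Efil ⟨min (j+1) n, hmin (j+1)⟩ : Subobject E) : C)
        - dg ((Efil ⟨min j n, hmin j⟩ : Subobject E) : C))
      = dg ((Efil ⟨min i.1 n, hmin i.1⟩ : Subobject E) : C)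
        - dg ((Efil ⟨min 0 n, hmin 0⟩ : Subobject E) : C) :=
    Finset.sum_range_sub (fun k => dg ((Efil ⟨min k n, hmin k⟩ : Subobject E) : C)) i.1
  have t4 : ∑ j ∈ Finset.range i.1,
      (rk ((Efil ⟨min (j+1) n, hmin (j+1)⟩ : Subobject E) : C)
        - rk ((Efil ⟨min j n, hmin j⟩ : Subobject E) : C))
      = rk ((Efil ⟨min i.1 n, hmin i.1⟩ : Subobject E) : C)
        - rk ((Efil ⟨min 0 n, hmin 0⟩ : Subobject E) : C) :=
    Finset.sum_range_sub (fun k => rk ((Efil ⟨min k n, hmin k⟩ : Subobject E) : C)) i.1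
  rw [t1, t2, t3, t4, he0, hen, ei1, ei2, hbot, htop, inf_top_eq, inf_bot_eq] at main
  ring_nf at main ⊢
  linarith
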